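/- arXiv:1301.2474 — 11 statements merged into one kernel-verified Lean document; each statement's English description precedes it below -/
import Mathlib

section
/- If a family F of cuts of a graph G separates every pair consisting of a maximal clique and a maximal stable set that are disjoint, then the family F together with the 2n cuts (N[x], V∖N[x]) and (N(x), V∖N(x)) for all vertices x separates every pair of a disjoint clique and stable set. -/
/-- If a family `F` of cuts separates every disjoint pair of a maximal clique and a maximal
stable set, then `F` together with the cuts `(N[x], N[x]ᶜ)` and `(N(x), N(x)ᶜ)` for all
vertices `x` separates every disjoint clique–stable-set pair. -/
theorem maximal_separation_suffices {V : Type*} [Fintype V] (G : SimpleGraph V)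
    (F : Set (Set V))
    (hF : ∀ K S : Set V, Maximal G.IsClique K → Maximal Gᶜ.IsClique S → Disjoint K S →
      ∃ A ∈ F, K ⊆ A ∧ S ⊆ Aᶜ) :
    ∀ K S : Set V, G.IsClique K → Gᶜ.IsClique S → Disjoint K S →
      ∃ A, (A ∈ F ∨ ∃ x : V, A = insert x (G.neighborSet x) ∨ A = G.neighborSet x) ∧
        K ⊆ A ∧ S ⊆ Aᶜ := by
  intro K S hK hS hdisj
  obtain ⟨K', hKK', hK'⟩ := Finite.exists_le_maximal hK
  obtain ⟨S', hSS', hS'⟩ := Finite.exists_le_maximal hS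
  by_cases hint : Disjoint K' S'
  · obtain ⟨A, hA, h1, h2⟩ := hF K' S' hK' hS' hint
    exact ⟨A, Or.inl hA, hKK'.trans h1, hSS'.trans h2⟩
  · rw [Set.not_disjoint_iff] at hint
    obtain ⟨x, hxK', hxS'⟩ := hint
    by_cases hxS : x ∈ S
    · -- x ∈ S, so x ∉ K; use N(x)
      refine ⟨G.neighborSet x, Or.inr ⟨x, Or.inr rfl⟩, ?_, ?_⟩
      · intro k hk
        have hk' := hKK' hk
        have hne : k ≠ x := fun h => hdisj.ne_of_mem hk hxS (h ▸ rfl) |>.elim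
        · exact hK'.1 hxK' hk' hne.symm
      · intro s hs hsN
        have hs' := hSS' hs
        by_cases hsx : s = x
        · exact G.irrefl (hsx ▸ hsN)
        · exact (hS'.1 hxS' hs' (Ne.symm hsx)).2 hsN
    · -- x ∉ S; use N[x]
      refine ⟨insert x (G.neighborSet x), Or.inr ⟨x, Or.inl rfl⟩, ?_, ?_⟩
      · intro k hk
        have hk' := hKK' hk
        by_cases hkx : k = x
        · exact hkx ▸ Set.mem_insert _ _
        · exact Set.mem_insert_of_mem _ (hK'.1 hxK' hk' (Ne.symm hkx))
      · intro s hs hsN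
        have hs' := hSS' hs
        have hsx : s ≠ x := fun h => hxS (h ▸ hs)
        rcases hsN with h | h
        · exact hsx h
        · exact (hS'.1 hxS' hs' (Ne.symm hsx)).2 h
end

section
/- If a class of graphs has the property that every graph in it on n vertices has at most P(n) maximal cliques for a polynomial P, then every graph G in the class has a CS-separator of size at most P(n) + 2n: namely, for each maximal clique K the cut (K, V∖K), together with the cuts (N[x], V∖N[x]) and (N(x), V∖N(x)) for all vertices x. -/
/-- If a graph on `n` vertices has at most `P(n)` maximal cliques, then the family consisting
of the cuts `(K, Kᶜ)` for maximal cliques `K`, together with `(N[x], N[x]ᶜ)` and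
`(N(x), N(x)ᶜ)` for all vertices `x`, is a CS-separator of size at most `P(n) + 2n`. -/
theorem cs_separator_from_few_maximal_cliques {V : Type*} [Fintype V] (G : SimpleGraph V)
    (P : Polynomial ℕ)
    (h : {K : Set V | Maximal G.IsClique K}.ncard ≤ P.eval (Fintype.card V)) :
    ∀ F : Set (Set V),
      F = {A | Maximal G.IsClique A} ∪ {A | ∃ x : V, A = insert x (G.neighborSet x)} ∪
          {A | ∃ x : V, A = G.neighborSet x} →
      F.ncard ≤ P.eval (Fintype.card V) + 2 * Fintype.card V ∧
        ∀ K S : Set V, G.IsClique K → Gᶜ.IsClique S → Disjoint K S →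
          ∃ A ∈ F, K ⊆ A ∧ S ⊆ Aᶜ := by
  intro F hF
  subst hF
  constructor
  · have h2 : {A : Set V | ∃ x : V, A = insert x (G.neighborSet x)}.ncard ≤ Fintype.card V := by
      have he : {A : Set V | ∃ x : V, A = insert x (G.neighborSet x)} =
          (fun x => insert x (G.neighborSet x)) '' Set.univ := by
        ext A; simp [eq_comm]
      rw [he]
      calc ((fun x => insert x (G.neighborSet x)) '' Set.univ).ncard ≤ (Set.univ : Set V).ncard :=
            Set.ncard_image_le (Set.toFinite _)
        _ = Fintype.card V := by simp [Set.ncard_univ, Nat.card_eq_fintype_card]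
    have h3 : {A : Set V | ∃ x : V, A = G.neighborSet x}.ncard ≤ Fintype.card V := by
      have he : {A : Set V | ∃ x : V, A = G.neighborSet x} =
          (fun x => G.neighborSet x) '' Set.univ := by
        ext A; simp [eq_comm]
      rw [he]
      calc ((fun x => G.neighborSet x) '' Set.univ).ncard ≤ (Set.univ : Set V).ncard :=
            Set.ncard_image_le (Set.toFinite _)
        _ = Fintype.card V := by simp [Set.ncard_univ, Nat.card_eq_fintype_card]
    calc ({A : Set V | Maximal G.IsClique A} ∪ {A | ∃ x : V, A = insert x (G.neighborSet x)} ∪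
          {A | ∃ x : V, A = G.neighborSet x}).ncard
        ≤ ({A : Set V | Maximal G.IsClique A} ∪
            {A | ∃ x : V, A = insert x (G.neighborSet x)}).ncard +
          {A : Set V | ∃ x : V, A = G.neighborSet x}.ncard := Set.ncard_union_le _ _
      _ ≤ ({A : Set V | Maximal G.IsClique A}.ncard +
            {A : Set V | ∃ x : V, A = insert x (G.neighborSet x)}.ncard) +
          {A : Set V | ∃ x : V, A = G.neighborSet x}.ncard := by
            gcongr; exact Set.ncard_union_le _ _
      _ ≤ P.eval (Fintype.card V) + Fintype.card V + Fintype.card V := by gcongr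
      _ = P.eval (Fintype.card V) + 2 * Fintype.card V := by ring
  · intro K S hK hS hdis
    -- extend K to a maximal clique
    have hfin : {C : Set V | G.IsClique C ∧ K ⊆ C}.Finite := Set.toFinite _
    obtain ⟨K', ⟨hK'c, hKK'⟩, hmax⟩ :=
      (show ∃ a ∈ {C : Set V | G.IsClique C ∧ K ⊆ C}, ∀ b ∈ {C : Set V | G.IsClique C ∧ K ⊆ C}, id a ≤ id b → id a = id b by
        obtain ⟨a, ha⟩ := Set.Finite.exists_maximal hfin ⟨K, hK, subset_rfl⟩
        exact ⟨a, ha.1, fun b hb hab => ha.eq_of_le hb hab⟩)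
    have hmaxK' : Maximal G.IsClique K' := by
      refine ⟨hK'c, fun C hC hsub => ?_⟩
      have := hmax C ⟨hC, hKK'.trans hsub⟩ hsub
      simp only [id] at this
      exact this.ge
    rcases (K' ∩ S).eq_empty_or_nonempty with hempty | ⟨x, hxK', hxS⟩
    · refine ⟨K', Or.inl (Or.inl hmaxK'), hKK', fun z hz hz' => ?_⟩
      exact Set.eq_empty_iff_forall_notMem.mp hempty z ⟨hz', hz⟩
    · refine ⟨G.neighborSet x, Or.inr ⟨x, rfl⟩, ?_, ?_⟩
      · intro y hy
        have hyK' : y ∈ K' := hKK' hy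
        have hne : y ≠ x := fun hyx => hdis.ne_of_mem hy hxS hyx
        exact (hK'c hxK' hyK' (Ne.symm hne)).symm.symm
      · intro z hzS hzN
        by_cases hzx : z = x
        · subst hzx; exact G.irrefl hzN
        · exact (hS hxS hzS (Ne.symm hzx)).2 hzN
end

section
/- For every antisymmetric real n×n matrix A (i.e., Aᵀ = −A), there exists a vector w ∈ ℝⁿ with w ≥ 0 coordinatewise, w ≠ 0, and Aw ≥ 0 coordinatewise. -/
open Matrix


/-- For every antisymmetric real `n × n` matrix `A`, there is a nonzero nonnegative vector `w`
with `A w ≥ 0` coordinatewise. -/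
theorem antisymmetric_farkas {n : ℕ} (hn : 0 < n) (A : Matrix (Fin n) (Fin n) ℝ)
    (hA : A.transpose = -A) :
    ∃ w : Fin n → ℝ, (∀ i, 0 ≤ w i) ∧ w ≠ 0 ∧ ∀ i, 0 ≤ A.mulVec w i := by
  by_contra hcon
  push_neg at hcon
  -- the simplex and its image
  set S : Set (Fin n → ℝ) := stdSimplex ℝ (Fin n) with hS
  set C : Set (Fin n → ℝ) := A.mulVecLin '' S with hC
  set K : Set (Fin n → ℝ) := {x | ∀ i, 0 ≤ x i} with hK
  have hScompact : IsCompact S := isCompact_stdSimplex ℝ (Fin n)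
  have hSconv : Convex ℝ S := convex_stdSimplex ℝ _
  have hCcompact : IsCompact C :=
    hScompact.image (A.mulVecLin.continuous_of_finiteDimensional)
  have hCconv : Convex ℝ C := hSconv.linear_image A.mulVecLin
  have hKclosed : IsClosed K := by
    have : K = ⋂ i, (fun x : Fin n → ℝ => x i) ⁻¹' Set.Ici 0 := by
      ext x; simp [hK, Set.mem_iInter]
    rw [this]
    exact isClosed_iInter fun i => isClosed_Ici.preimage (continuous_apply i)
  have hKconv : Convex ℝ K := by
    intro x hx y hy a b ha hb hab i
    exact add_nonneg (mul_nonneg ha (hx i)) (mul_nonneg hb (hy i))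
  have hdisj : Disjoint C K := by
    rw [Set.disjoint_left]
    rintro c ⟨w, hwS, rfl⟩ hcK
    have hw0 : ∀ i, 0 ≤ w i := hwS.1
    have hwne : w ≠ 0 := by
      intro h
      have := hwS.2
      simp [h] at this
    obtain ⟨i, hi⟩ := hcon w hw0 hwne
    exact absurd (hcK i) (not_le.mpr hi)
  obtain ⟨f, u, v, hfu, huv, hfv⟩ :=
    geometric_hahn_banach_compact_closed hCconv hCcompact hKconv hKclosed hdisj
  -- basic facts
  have h0K : (0 : Fin n → ℝ) ∈ K := fun i => le_refl 0
  have hv0 : v < 0 := by simpa using hfv 0 h0K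
  have hu0 : u < 0 := lt_trans huv hv0
  set y : Fin n → ℝ := fun i => f ((Pi.single i 1 : Fin n → ℝ)) with hy
  have hfx : ∀ x : Fin n → ℝ, f x = ∑ i, x i * y i := by
    intro x
    have hx : x = ∑ i, x i • (Pi.single i 1 : Fin n → ℝ) := by
      ext j
      simp [Pi.single_apply]
    conv_lhs => rw [hx]
    rw [map_sum]
    simp [hy, smul_eq_mul]
  -- y is nonnegative
  have hy0 : ∀ i, 0 ≤ y i := by
    intro i
    by_contra h
    push_neg at h
    set t : ℝ := (v - 1) / y i with ht
    have htpos : 0 < t := div_pos_of_neg_of_neg (by linarith) h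
    have hmem : (t • (Pi.single i 1 : Fin n → ℝ)) ∈ K := by
      intro j
      simp only [Pi.smul_apply, smul_eq_mul]
      rcases eq_or_ne j i with rfl | hne
      · simp [htpos.le]
      · simp [Pi.single_apply, hne]
    have := hfv _ hmem
    rw [f.map_smul] at this
    have hfy : f ((Pi.single i 1 : Fin n → ℝ)) = y i := rfl
    rw [smul_eq_mul, hfy, ht, div_mul_cancel₀ _ (ne_of_lt h)] at this
    linarith
  -- y is nonzero: otherwise f vanishes on the nonempty C
  have hSne : S.Nonempty := by
    refine ⟨fun _ => (n : ℝ)⁻¹, fun i => by positivity, ?_⟩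
    simp [Finset.sum_const, hn.ne']
  obtain ⟨w₀, hw₀⟩ := hSne
  have hyne : ∃ i, 0 < y i := by
    by_contra h
    push_neg at h
    have hyz : ∀ i, y i = 0 := fun i => le_antisymm (h i) (hy0 i)
    have : f (A.mulVecLin w₀) < u := hfu _ ⟨w₀, hw₀, rfl⟩
    rw [hfx] at this
    simp [hyz] at this
    linarith
  have hsum : 0 < ∑ i, y i := by
    obtain ⟨i, hi⟩ := hyne
    exact Finset.sum_pos' (fun j _ => hy0 j) ⟨i, Finset.mem_univ i, hi⟩
  -- the normalized y lies in the simplex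
  set w : Fin n → ℝ := (∑ i, y i)⁻¹ • y with hw
  have hwS : w ∈ S := by
    constructor
    · intro i
      exact mul_nonneg (inv_nonneg.mpr hsum.le) (hy0 i)
    · simp only [hw, Pi.smul_apply, smul_eq_mul]
      rw [← Finset.mul_sum, inv_mul_cancel₀ hsum.ne']
  -- antisymmetry: yᵀ A y = 0
  have hq : y ⬝ᵥ A.mulVec y = 0 := by
    have h1 : y ⬝ᵥ A.mulVec y = A.vecMul y ⬝ᵥ y := Matrix.dotProduct_mulVec y A y
    have h2 : A.vecMul y = A.transpose.mulVec y := (Matrix.mulVec_transpose A y).symm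
    rw [h2, hA] at h1
    rw [Matrix.neg_mulVec, neg_dotProduct] at h1
    rw [dotProduct_comm] at h1 ⊢
    linarith
  -- contradiction
  have hlt : f (A.mulVecLin w) < u := hfu _ ⟨w, hwS, rfl⟩
  have heq : f (A.mulVecLin w) = (∑ i, y i)⁻¹ * (y ⬝ᵥ A.mulVec y) := by
    rw [hfx]
    have h4 : A.mulVecLin w = (∑ i, y i)⁻¹ • A.mulVec y := by
      rw [hw]; exact A.mulVecLin.map_smul _ y
    rw [h4, dotProduct_comm]
    simp only [Pi.smul_apply, smul_eq_mul, dotProduct]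
    rw [Finset.mul_sum]
    exact Finset.sum_congr rfl fun i _ => by ring
  rw [heq, hq, mul_zero] at hlt
  linarith
end

section
/- For every finite oriented graph G = (V,E) (no 2-cycles), there exists a weight function w : V → [0,1] with ∑_{v∈V} w(v) = 1 such that for every vertex x, w(N⁺(x)) ≥ w(N⁻(x)), where N⁺(x) and N⁻(x) denote the out-neighborhood and in-neighborhood of x. -/
open Finset

/-- Main lemma: for a skew-symmetric matrix `M` there is a point of the standard simplex
with `M w ≥ 0` componentwise. -/
lemma skew_exists_nonneg {V : Type*} [Fintype V] [Nonempty V]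
    (M : V → V → ℝ) (hskew : ∀ x y, M x y = - M y x) :
    ∃ w ∈ stdSimplex ℝ V, ∀ x, 0 ≤ ∑ y, M x y * w y := by
  classical
  by_contra hcon
  push_neg at hcon
  -- the linear map w ↦ M w
  set L : (V → ℝ) →ₗ[ℝ] (V → ℝ) :=
    { toFun := fun w x => ∑ y, M x y * w y
      map_add' := by intro a b; funext x; simp [mul_add, Finset.sum_add_distrib]
      map_smul' := by
        intro c a; funext x
        simp only [RingHom.id_apply, Pi.smul_apply, smul_eq_mul, Finset.mul_sum]
        exact Finset.sum_congr rfl fun y _ => by ring } with hL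
  have hLcont : Continuous L := LinearMap.continuous_of_finiteDimensional L
  set S : Set (V → ℝ) := L '' stdSimplex ℝ V with hS
  set T : Set (V → ℝ) := {q | ∀ x, 0 ≤ q x} with hT
  have hScvx : Convex ℝ S := (convex_stdSimplex ℝ V).linear_image L
  have hScpt : IsCompact S := (isCompact_stdSimplex ℝ V).image hLcont
  have hTcvx : Convex ℝ T := by
    intro a ha b hb s t hs ht hst x
    exact add_nonneg (mul_nonneg hs (ha x)) (mul_nonneg ht (hb x))
  have hTcl : IsClosed T := by
    have : T = ⋂ x, {q : V → ℝ | 0 ≤ q x} := by ext q; simp [hT, Set.mem_iInter]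
    rw [this]
    exact isClosed_iInter fun x => isClosed_le continuous_const (continuous_apply x)
  have hdisj : Disjoint S T := by
    rw [Set.disjoint_left]
    rintro q ⟨w, hw, rfl⟩ hq
    obtain ⟨x, hx⟩ := hcon w hw
    exact absurd (hq x) (not_le.mpr hx)
  obtain ⟨f, u, v, hfS, huv, hfT⟩ :=
    geometric_hahn_banach_compact_closed hScvx hScpt hTcvx hTcl hdisj
  have hv0 : v < 0 := by simpa using hfT 0 (fun x => le_refl 0)
  -- f nonneg on T
  have hfT' : ∀ b ∈ T, (0:ℝ) ≤ f b := by
    intro b hb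
    by_contra hneg
    push_neg at hneg
    have ht : (0:ℝ) < (v - 1) / f b := div_pos_of_neg_of_neg (by linarith) hneg
    have hmem : ((v-1)/f b) • b ∈ T := fun x => mul_nonneg ht.le (hb x)
    have := hfT _ hmem
    rw [map_smul, smul_eq_mul, div_mul_cancel₀ _ (ne_of_lt hneg)] at this
    linarith
  -- coordinates of f
  set z : V → ℝ := fun x => f (Pi.single x 1) with hz
  have hz0 : ∀ x, 0 ≤ z x := fun x => hfT' _ (fun y => by
    rcases eq_or_ne y x with rfl | h
    · simp [Pi.single_apply]
    · simp [Pi.single_apply, h])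
  have hfrep : ∀ q : V → ℝ, f q = ∑ x, q x * z x := by
    intro q
    have hq : q = ∑ x, q x • (Pi.single x 1 : V → ℝ) := by
      funext y
      simp [Pi.single_apply, Finset.sum_apply]
    conv_lhs => rw [hq]
    rw [map_sum]
    simp only [map_smul, smul_eq_mul]
    rfl
  -- the simplex is nonempty
  have hcard : (0:ℝ) < (Fintype.card V : ℝ) := by
    exact_mod_cast Fintype.card_pos
  have hw0 : (fun _ : V => ((Fintype.card V : ℝ))⁻¹) ∈ stdSimplex ℝ V := by
    constructor
    · intro x; positivity
    · rw [Finset.sum_const, Finset.card_univ, nsmul_eq_mul,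
        mul_inv_cancel₀ (by exact_mod_cast Fintype.card_pos.ne' : (Fintype.card V : ℝ) ≠ 0)]
  -- f negative on S
  have hSneg : ∀ a ∈ S, f a < 0 := fun a ha => lt_trans (hfS a ha) (lt_trans huv hv0)
  -- z is not identically zero
  have hzsum : 0 < ∑ x, z x := by
    rcases lt_or_eq_of_le (Finset.sum_nonneg (fun x _ => hz0 x)) with h | h
    · exact h
    have hz' : ∀ x, z x = 0 := by
      intro x
      have := (Finset.sum_eq_zero_iff_of_nonneg (fun x _ => hz0 x)).mp h.symm
      exact this x (mem_univ x)
    have : f (L (fun _ => ((Fintype.card V : ℝ))⁻¹)) < 0 :=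
      hSneg _ ⟨_, hw0, rfl⟩
    rw [hfrep] at this
    simp [hz'] at this
  set p : V → ℝ := fun x => z x / ∑ x, z x with hp
  have hpmem : p ∈ stdSimplex ℝ V := by
    constructor
    · intro x; exact div_nonneg (hz0 x) hzsum.le
    · rw [← Finset.sum_div, div_self hzsum.ne']
  have h1 : f (L p) < 0 := hSneg _ ⟨p, hpmem, rfl⟩
  -- but f (L p) = (∑ z) * pᵀ M p = 0
  have hquad : ∑ x, ∑ y, p x * M x y * p y = 0 := by
    have hA : (∑ x, ∑ y, p x * M x y * p y) = - ∑ x, ∑ y, p x * M x y * p y := by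
      conv_lhs => rw [Finset.sum_comm]
      rw [← Finset.sum_neg_distrib]
      refine Finset.sum_congr rfl fun x _ => ?_
      rw [← Finset.sum_neg_distrib]
      refine Finset.sum_congr rfl fun y _ => ?_
      rw [hskew y x]; ring
    linarith
  have hzp : ∀ x, z x = (∑ x, z x) * p x := by
    intro x; rw [hp]; field_simp
  have h2 : f (L p) = (∑ x, z x) * ∑ x, ∑ y, p x * M x y * p y := by
    rw [hfrep, Finset.mul_sum]
    refine Finset.sum_congr rfl fun x _ => ?_
    have hx : (L p) x = ∑ y, M x y * p y := rfl
    rw [hx, hzp x, Finset.sum_mul, Finset.mul_sum]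
    exact Finset.sum_congr rfl fun y _ => by ring
  rw [h2, hquad, mul_zero] at h1
  exact lt_irrefl _ h1

/-- For every finite oriented graph there is a probability weight function `w` on the vertices
such that every vertex's out-neighborhood weighs at least as much as its in-neighborhood. -/
theorem oriented_graph_weight_function {V : Type*} [Fintype V] [Nonempty V]
    (E : V → V → Prop) [DecidableRel E] (hE : ∀ x y, E x y → ¬ E y x) :
    ∃ w : V → ℝ, (∀ v, 0 ≤ w v ∧ w v ≤ 1) ∧ (∑ v, w v = 1) ∧
      ∀ x, ∑ y ∈ Finset.univ.filter (fun y => E y x), w y ≤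
           ∑ y ∈ Finset.univ.filter (fun y => E x y), w y := by
  classical
  set M : V → V → ℝ := fun x y => (if E x y then 1 else 0) - (if E y x then 1 else 0) with hM
  have hskew : ∀ x y, M x y = - M y x := by intro x y; simp only [hM]; ring
  obtain ⟨w, ⟨hw0, hw1⟩, hwgood⟩ := skew_exists_nonneg M hskew
  refine ⟨w, fun v => ⟨hw0 v, ?_⟩, hw1, ?_⟩
  · calc w v = ∑ x ∈ {v}, w x := by simp
    _ ≤ ∑ x, w x := Finset.sum_le_sum_of_subset_of_nonneg (Finset.subset_univ _)
        (fun x _ _ => hw0 x)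
    _ = 1 := hw1
  · intro x
    have := hwgood x
    have hexp : ∑ y, M x y * w y =
        (∑ y ∈ Finset.univ.filter (fun y => E x y), w y) -
        (∑ y ∈ Finset.univ.filter (fun y => E y x), w y) := by
      rw [hM]
      have hy : ∀ y, ((if E x y then (1:ℝ) else 0) - (if E y x then 1 else 0)) * w y
          = (if E x y then w y else 0) - (if E y x then w y else 0) := by
        intro y; split_ifs <;> ring
      simp only [hy, Finset.sum_sub_distrib, Finset.sum_filter]
    rw [hexp] at this
    linarith
end

section
/- If V₁ and V₂ are disjoint nonempty completely non-adjacent vertex subsets of a graph G, V₃ = V ∖ (V₁ ∪ V₂), and G[V₁ ∪ V₃] has a CS-separator F₁ while G[V₂ ∪ V₃] has a CS-separator F₂, then the family obtained by extending each cut (U,W) of F₁ to (U, W ∪ V₂) and each cut (U,W) of F₂ to (U, W ∪ V₁) is a CS-separator for G of size |F₁| + |F₂|. -/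
/-- If `V₁, V₂` are disjoint nonempty completely non-adjacent sets, `V₃` the remaining
vertices, and `F₁, F₂` are CS-separators of the subgraphs induced on `V₁ ∪ V₃` and
`V₂ ∪ V₃`, then extending each cut `(U,W)` of `F₁` to `(U, W ∪ V₂)` and each cut of `F₂`
to `(U, W ∪ V₁)` yields a CS-separator for `G` of size at most `|F₁| + |F₂|`. -/
theorem cs_separator_glue {V : Type*} [Fintype V] (G : SimpleGraph V) (V₁ V₂ : Set V)
    (h1 : V₁.Nonempty) (h2 : V₂.Nonempty) (hdisj : Disjoint V₁ V₂)
    (hnonadj : ∀ x ∈ V₁, ∀ y ∈ V₂, ¬ G.Adj x y)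
    (V₃ : Set V) (hV₃ : V₃ = (V₁ ∪ V₂)ᶜ)
    (F₁ F₂ : Finset (Set V × Set V))
    (hF₁cut : ∀ p ∈ F₁, p.1 ∪ p.2 = V₁ ∪ V₃ ∧ Disjoint p.1 p.2)
    (hF₂cut : ∀ p ∈ F₂, p.1 ∪ p.2 = V₂ ∪ V₃ ∧ Disjoint p.1 p.2)
    (hF₁ : ∀ K S : Set V, G.IsClique K → Gᶜ.IsClique S → Disjoint K S →
      K ⊆ V₁ ∪ V₃ → S ⊆ V₁ ∪ V₃ → ∃ p ∈ F₁, K ⊆ p.1 ∧ S ⊆ p.2)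
    (hF₂ : ∀ K S : Set V, G.IsClique K → Gᶜ.IsClique S → Disjoint K S →
      K ⊆ V₂ ∪ V₃ → S ⊆ V₂ ∪ V₃ → ∃ p ∈ F₂, K ⊆ p.1 ∧ S ⊆ p.2)
    (F : Finset (Set V × Set V))
    (hF : ∀ p, p ∈ F ↔ ((∃ q ∈ F₁, p = (q.1, q.2 ∪ V₂)) ∨ (∃ q ∈ F₂, p = (q.1, q.2 ∪ V₁)))) :
    F.card ≤ F₁.card + F₂.card ∧
    (∀ p ∈ F, p.1 ∪ p.2 = Set.univ ∧ Disjoint p.1 p.2) ∧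
    ∀ K S : Set V, G.IsClique K → Gᶜ.IsClique S → Disjoint K S →
      ∃ p ∈ F, K ⊆ p.1 ∧ S ⊆ p.2 := by
  classical
  have huniv : V₁ ∪ V₂ ∪ V₃ = Set.univ := by
    rw [hV₃]; exact Set.union_compl_self _
  have hd12 : Disjoint (V₁ ∪ V₃) V₂ := by
    refine Set.disjoint_union_left.2 ⟨hdisj, ?_⟩
    rw [hV₃]
    exact Set.disjoint_compl_left_iff_subset.2 Set.subset_union_right
  have hd21 : Disjoint (V₂ ∪ V₃) V₁ := by
    refine Set.disjoint_union_left.2 ⟨hdisj.symm, ?_⟩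
    rw [hV₃]
    exact Set.disjoint_compl_left_iff_subset.2 Set.subset_union_left
  refine ⟨?_, ?_, ?_⟩
  · have hsub : F ⊆ F₁.image (fun q => (q.1, q.2 ∪ V₂)) ∪
        F₂.image (fun q => (q.1, q.2 ∪ V₁)) := by
      intro p hp
      rcases (hF p).1 hp with ⟨q, hq, rfl⟩ | ⟨q, hq, rfl⟩
      · exact Finset.mem_union_left _ (Finset.mem_image_of_mem _ hq)
      · exact Finset.mem_union_right _ (Finset.mem_image_of_mem _ hq)
    calc F.card ≤ _ := Finset.card_le_card hsub
      _ ≤ _ := Finset.card_union_le _ _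
      _ ≤ F₁.card + F₂.card :=
        Nat.add_le_add (Finset.card_image_le) (Finset.card_image_le)
  · intro p hp
    rcases (hF p).1 hp with ⟨q, hq, rfl⟩ | ⟨q, hq, rfl⟩
    · obtain ⟨hu, hd⟩ := hF₁cut q hq
      constructor
      · simp only
        rw [← Set.union_assoc, hu, ← huniv]
        ac_rfl
      · refine Set.disjoint_union_right.2 ⟨hd, ?_⟩
        exact hd12.mono_left ((Set.subset_union_left).trans hu.le)
    · obtain ⟨hu, hd⟩ := hF₂cut q hq
      constructor
      · simp only
        rw [← Set.union_assoc, hu, ← huniv]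
        ac_rfl
      · refine Set.disjoint_union_right.2 ⟨hd, ?_⟩
        exact hd21.mono_left ((Set.subset_union_left).trans hu.le)
  · intro K S hK hS hKS
    by_cases hK2 : ∃ x ∈ K, x ∈ V₂
    · -- K meets V₂, so K ∩ V₁ = ∅, K ⊆ V₂ ∪ V₃
      obtain ⟨x, hxK, hxV2⟩ := hK2
      have hKsub : K ⊆ V₂ ∪ V₃ := by
        intro y hy
        have hy' : y ∈ V₁ ∪ V₂ ∪ V₃ := huniv ▸ Set.mem_univ y
        rcases hy' with (hy1 | hy2) | hy3
        · exfalso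
          have hne : y ≠ x := fun h => hdisj.ne_of_mem hy1 hxV2 h
          exact hnonadj y hy1 x hxV2 (hK hy hxK hne)
        · exact Or.inl hy2
        · exact Or.inr hy3
      have hSsub : S \ V₁ ⊆ V₂ ∪ V₃ := by
        intro y hy
        have hy' : y ∈ V₁ ∪ V₂ ∪ V₃ := huniv ▸ Set.mem_univ y
        rcases hy' with (hy1 | hy2) | hy3
        · exact absurd hy1 hy.2
        · exact Or.inl hy2
        · exact Or.inr hy3
      obtain ⟨p, hp, hKp, hSp⟩ := hF₂ K (S \ V₁) hK (hS.subset Set.diff_subset)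
        (hKS.mono_right Set.diff_subset) hKsub hSsub
      refine ⟨(p.1, p.2 ∪ V₁), (hF _).2 (Or.inr ⟨p, hp, rfl⟩), hKp, ?_⟩
      intro y hy
      by_cases hy1 : y ∈ V₁
      · exact Or.inr hy1
      · exact Or.inl (hSp ⟨hy, hy1⟩)
    · have hKsub : K ⊆ V₁ ∪ V₃ := by
        intro y hy
        have hy' : y ∈ V₁ ∪ V₂ ∪ V₃ := huniv ▸ Set.mem_univ y
        rcases hy' with (hy1 | hy2) | hy3
        · exact Or.inl hy1
        · exact absurd ⟨y, hy, hy2⟩ hK2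
        · exact Or.inr hy3
      have hSsub : S \ V₂ ⊆ V₁ ∪ V₃ := by
        intro y hy
        have hy' : y ∈ V₁ ∪ V₂ ∪ V₃ := huniv ▸ Set.mem_univ y
        rcases hy' with (hy1 | hy2) | hy3
        · exact Or.inl hy1
        · exact absurd hy2 hy.2
        · exact Or.inr hy3
      obtain ⟨p, hp, hKp, hSp⟩ := hF₁ K (S \ V₂) hK (hS.subset Set.diff_subset)
        (hKS.mono_right Set.diff_subset) hKsub hSsub
      refine ⟨(p.1, p.2 ∪ V₂), (hF _).2 (Or.inl ⟨p, hp, rfl⟩), hKp, ?_⟩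
      intro y hy
      by_cases hy2 : y ∈ V₂
      · exact Or.inr hy2
      · exact Or.inl (hSp ⟨hy, hy2⟩)
end

section
/- Every graph G on n vertices admits a fooling set of size n + 1, i.e., a family of n+1 pairs (Kᵢ, Sᵢ) of a clique and a disjoint stable set of G such that for all i ≠ j, Kᵢ ∩ Sⱼ ≠ ∅ or Kⱼ ∩ Sᵢ ≠ ∅. -/
open SimpleGraph

private lemma fooling_aux (n : ℕ) : ∀ (V : Type*) [Fintype V] (G : SimpleGraph V),
    Fintype.card V = n →
    ∃ l : List (Set V × Set V), l.length = n + 1 ∧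
      (∀ p ∈ l, G.IsClique p.1 ∧ Gᶜ.IsClique p.2 ∧ Disjoint p.1 p.2) ∧
      l.Pairwise (fun p q => (p.1 ∩ q.2).Nonempty ∨ (q.1 ∩ p.2).Nonempty) := by
  induction n using Nat.strong_induction_on with
  | _ n ih =>
    intro V _ G hcard
    classical
    rcases isEmpty_or_nonempty V with hV | hV
    · have hn : n = 0 := by rw [← hcard]; exact Fintype.card_eq_zero
      subst hn
      refine ⟨[(∅, ∅)], rfl, ?_, ?_⟩
      · rintro p hp
        simp only [List.mem_singleton] at hp
        subst hp
        exact ⟨by simp [SimpleGraph.IsClique], by simp [SimpleGraph.IsClique], by simp⟩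
      · simp
    · obtain ⟨v⟩ := hV
      set A : Set V := G.neighborSet v with hAdef
      set B : Set V := (insert v A)ᶜ with hBdef
      have hvA : v ∉ A := by simp [hAdef]
      have hAfin : A.Finite := Set.toFinite A
      haveI : Fintype ↥A := Fintype.ofFinite _
      haveI : Fintype ↥B := Fintype.ofFinite _
      have hcardsum : (insert v A).ncard + B.ncard = n := by
        rw [hBdef, Set.ncard_add_ncard_compl, ← hcard, Nat.card_eq_fintype_card]
      have hins : (insert v A).ncard = A.ncard + 1 := Set.ncard_insert_of_notMem hvA hAfin
      have hcA : Fintype.card ↥A = A.ncard := by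
        rw [← Nat.card_eq_fintype_card, Nat.card_coe_set_eq]
      have hcB : Fintype.card ↥B = B.ncard := by
        rw [← Nat.card_eq_fintype_card, Nat.card_coe_set_eq]
      have hAlt : A.ncard < n := by omega
      have hBlt : B.ncard < n := by omega
      obtain ⟨l1, hl1len, hl1mem, hl1pw⟩ := ih A.ncard hAlt ↥A (G.induce A) hcA
      obtain ⟨l2, hl2len, hl2mem, hl2pw⟩ := ih B.ncard hBlt ↥B (G.induce B) hcB
      set f1 : Set ↥A × Set ↥A → Set V × Set V :=
        fun p => (insert v (Subtype.val '' p.1), Subtype.val '' p.2) with hf1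
      set f2 : Set ↥B × Set ↥B → Set V × Set V :=
        fun p => (Subtype.val '' p.1, insert v (Subtype.val '' p.2)) with hf2
      refine ⟨l1.map f1 ++ l2.map f2, ?_, ?_, ?_⟩
      · simp [hl1len, hl2len]; omega
      · intro p hp
        rcases List.mem_append.1 hp with hp | hp
        · obtain ⟨q, hq, rfl⟩ := List.mem_map.1 hp
          obtain ⟨hqK, hqS, hqd⟩ := hl1mem q hq
          refine ⟨?_, ?_, ?_⟩
          · -- clique : insert v (val '' q.1)
            intro x hx y hy hxy
            rcases hx with rfl | ⟨a, ha, rfl⟩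
            · rcases hy with rfl | ⟨b, hb, rfl⟩
              · exact absurd rfl hxy
              · exact b.2
            · rcases hy with rfl | ⟨b, hb, rfl⟩
              · exact (G.adj_symm a.2)
              · have hab : a ≠ b := fun h => hxy (by rw [h])
                exact hqK ha hb hab
          · -- stable : val '' q.2
            rintro x ⟨a, ha, rfl⟩ y ⟨b, hb, rfl⟩ hxy
            have hab : a ≠ b := fun h => hxy (by rw [h])
            have := hqS ha hb hab
            rw [SimpleGraph.compl_adj] at this ⊢
            exact ⟨hxy, this.2⟩
          · rw [Set.disjoint_left]
            rintro x (rfl | ⟨a, ha, rfl⟩) ⟨b, hb, hbe⟩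
            · exact hvA (hbe ▸ b.2)
            · have : a = b := Subtype.val_injective hbe.symm
              exact (Set.disjoint_left.1 hqd ha) (this ▸ hb)
        · obtain ⟨q, hq, rfl⟩ := List.mem_map.1 hp
          obtain ⟨hqK, hqS, hqd⟩ := hl2mem q hq
          have hBprop : ∀ b : ↥B, (b : V) ≠ v ∧ ¬ G.Adj v b := by
            intro b
            have hb2 : (b : V) ∉ insert v A := b.2
            rw [Set.mem_insert_iff] at hb2
            push_neg at hb2
            exact ⟨hb2.1, fun h => hb2.2 h⟩
          refine ⟨?_, ?_, ?_⟩
          · rintro x ⟨a, ha, rfl⟩ y ⟨b, hb, rfl⟩ hxy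
            have hab : a ≠ b := fun h => hxy (by rw [h])
            exact hqK ha hb hab
          · intro x hx y hy hxy
            rcases hx with rfl | ⟨a, ha, rfl⟩
            · rcases hy with rfl | ⟨b, hb, rfl⟩
              · exact absurd rfl hxy
              · rw [SimpleGraph.compl_adj]
                exact ⟨hxy, (hBprop b).2⟩
            · rcases hy with rfl | ⟨b, hb, rfl⟩
              · rw [SimpleGraph.compl_adj]
                exact ⟨hxy, fun h => (hBprop a).2 h.symm⟩
              · have hab : a ≠ b := fun h => hxy (by rw [h])
                have := hqS ha hb hab
                rw [SimpleGraph.compl_adj] at this ⊢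
                exact ⟨hxy, this.2⟩
          · rw [Set.disjoint_left]
            rintro x ⟨a, ha, rfl⟩ (hxv | ⟨b, hb, hbe⟩)
            · exact (hBprop a).1 hxv
            · have : a = b := Subtype.val_injective hbe.symm
              exact (Set.disjoint_left.1 hqd ha) (this ▸ hb)
      · rw [List.pairwise_append]
        refine ⟨?_, ?_, ?_⟩
        · refine List.Pairwise.map f1 ?_ hl1pw
          rintro p q (⟨x, hx1, hx2⟩ | ⟨x, hx1, hx2⟩)
          · exact Or.inl ⟨x, Set.mem_insert_of_mem _ ⟨x, hx1, rfl⟩, ⟨x, hx2, rfl⟩⟩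
          · exact Or.inr ⟨x, Set.mem_insert_of_mem _ ⟨x, hx1, rfl⟩, ⟨x, hx2, rfl⟩⟩
        · refine List.Pairwise.map f2 ?_ hl2pw
          rintro p q (⟨x, hx1, hx2⟩ | ⟨x, hx1, hx2⟩)
          · exact Or.inl ⟨x, ⟨x, hx1, rfl⟩, Set.mem_insert_of_mem _ ⟨x, hx2, rfl⟩⟩
          · exact Or.inr ⟨x, ⟨x, hx1, rfl⟩, Set.mem_insert_of_mem _ ⟨x, hx2, rfl⟩⟩
        · intro p hp q hq
          obtain ⟨p', _, rfl⟩ := List.mem_map.1 hp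
          obtain ⟨q', _, rfl⟩ := List.mem_map.1 hq
          exact Or.inl ⟨v, Set.mem_insert _ _, Set.mem_insert _ _⟩

/-- Every graph on `n` vertices admits a fooling set of size `n + 1`: a family of `n+1`
pairs `(Kᵢ, Sᵢ)` of a clique and a disjoint stable set such that for all `i ≠ j`,
`Kᵢ ∩ Sⱼ ≠ ∅` or `Kⱼ ∩ Sᵢ ≠ ∅`. -/
theorem fooling_set_of_size_n_plus_one {V : Type*} [Fintype V] (G : SimpleGraph V) :
    ∃ P : Fin (Fintype.card V + 1) → Set V × Set V,
      (∀ i, G.IsClique (P i).1 ∧ Gᶜ.IsClique (P i).2 ∧ Disjoint (P i).1 (P i).2) ∧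
      ∀ i j, i ≠ j → ((P i).1 ∩ (P j).2).Nonempty ∨ ((P j).1 ∩ (P i).2).Nonempty := by
  obtain ⟨l, hlen, hmem, hpw⟩ := fooling_aux (Fintype.card V) V G rfl
  refine ⟨fun i => l.get ⟨i, by rw [hlen]; exact i.2⟩, fun i => hmem _ (l.get_mem _), ?_⟩
  intro i j hij
  rw [List.pairwise_iff_get] at hpw
  rcases lt_trichotomy (i : ℕ) (j : ℕ) with h | h | h
  · exact hpw ⟨i, _⟩ ⟨j, _⟩ h
  · exact absurd (Fin.ext h) hij
  · exact (hpw ⟨j, _⟩ ⟨i, _⟩ h).symm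
end

section
/- If some graph G on n vertices admits a fooling set of size m, then the complete graph K_m admits an oriented bipartite packing of size at most n, i.e., bp_or(K_m) ≤ n. -/
/-- A packing certificate (oriented bipartite packing) of a graph `H`, indexed by `Fin k`:
pairs of disjoint completely adjacent sets covering every edge in at least one direction and
covering no ordered pair of adjacent vertices twice. -/
def IsPackingCert {W : Type*} (H : SimpleGraph W) {k : ℕ} (P : Fin k → Set W × Set W) : Prop :=
  (∀ i, Disjoint (P i).1 (P i).2) ∧
  (∀ i, ∀ x ∈ (P i).1, ∀ y ∈ (P i).2, H.Adj x y) ∧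
  (∀ x y, H.Adj x y → ∃ i, (x ∈ (P i).1 ∧ y ∈ (P i).2) ∨ (y ∈ (P i).1 ∧ x ∈ (P i).2)) ∧
  (∀ i j, i ≠ j → ∀ x y, H.Adj x y →
    ¬(x ∈ (P i).1 ∧ x ∈ (P j).1 ∧ y ∈ (P i).2 ∧ y ∈ (P j).2))

/-- A fooling set on a graph `G`: pairs of a clique and a disjoint stable set that pairwise
cross-intersect. -/
def IsFoolingSet {V : Type*} (G : SimpleGraph V) {m : ℕ} (f : Fin m → Set V × Set V) : Prop :=
  (∀ i, G.IsClique (f i).1 ∧ Gᶜ.IsClique (f i).2 ∧ Disjoint (f i).1 (f i).2) ∧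
  ∀ i j, i ≠ j → ((f i).1 ∩ (f j).2).Nonempty ∨ ((f j).1 ∩ (f i).2).Nonempty

/-- If some graph on `n` vertices admits a fooling set of size `m`, then `bp_or(K_m) ≤ n`. -/
theorem bpor_complete_le_of_fooling_set {V : Type*} [Fintype V] {n m : ℕ}
    (hn : Fintype.card V = n) (G : SimpleGraph V)
    (f : Fin m → Set V × Set V) (hf : IsFoolingSet G f) :
    ∃ P : Fin n → Set (Fin m) × Set (Fin m),
      IsPackingCert (⊤ : SimpleGraph (Fin m)) P := by

  obtain ⟨h1, h2⟩ := hf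
  let e : Fin n ≃ V := (Fintype.equivFinOfCardEq hn).symm
  refine ⟨fun k => ({i | e k ∈ (f i).1}, {i | e k ∈ (f i).2}), ?_, ?_, ?_, ?_⟩
  · intro k
    rw [Set.disjoint_left]
    intro i hi1 hi2
    exact (h1 i).2.2.le_bot ⟨hi1, hi2⟩
  · intro k i hi j hj
    simp only [SimpleGraph.top_adj]
    rintro rfl
    exact (h1 i).2.2.le_bot ⟨hi, hj⟩
  · intro i j hij
    rcases h2 i j hij with ⟨v, hv1, hv2⟩ | ⟨v, hv1, hv2⟩
    · exact ⟨e.symm v, Or.inl ⟨by simpa using hv1, by simpa using hv2⟩⟩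
    · exact ⟨e.symm v, Or.inr ⟨by simpa using hv1, by simpa using hv2⟩⟩
  · intro k l hkl x y hxy ⟨hx1, hx2, hy1, hy2⟩
    have hne : e k ≠ e l := fun h => hkl (e.injective h)
    have hadj : G.Adj (e k) (e l) := (h1 x).1 hx1 hx2 hne
    have hnadj : Gᶜ.Adj (e k) (e l) := (h1 y).2.1 hy1 hy2 hne
    exact hnadj.2 hadj
end

section
/- If the complete graph K_m admits an oriented bipartite packing of size n, then there exists a graph G on n vertices admitting a fooling set of size m. -/
/-- If `K_m` admits an oriented bipartite packing of size `n`, then some graph on `n`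
vertices admits a fooling set of size `m`. -/
theorem fooling_set_of_bpor_complete {n m : ℕ} (P : Fin n → Set (Fin m) × Set (Fin m))
    (hP : IsPackingCert (⊤ : SimpleGraph (Fin m)) P) :
    ∃ (G : SimpleGraph (Fin n)) (f : Fin m → Set (Fin n) × Set (Fin n)),
      IsFoolingSet G f := by
  obtain ⟨hdisj, -, hcov, huniq⟩ := hP
  refine ⟨SimpleGraph.mk (fun i j => i ≠ j ∧ ∃ x, x ∈ (P i).1 ∧ x ∈ (P j).1)
      ⟨fun i j ⟨h1, x, h2, h3⟩ => ⟨h1.symm, x, h3, h2⟩⟩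
      ⟨fun i ⟨h1, _⟩ => h1 rfl⟩,
    fun x => ({i | x ∈ (P i).1}, {i | x ∈ (P i).2}), ?_, ?_⟩
  · intro x
    refine ⟨fun i hi j hj hij => ⟨hij, x, hi, hj⟩, ?_, ?_⟩
    · intro i hi j hj hij
      simp only [SimpleGraph.compl_adj]
      refine ⟨hij, fun ⟨hne, y, hyi, hyj⟩ => ?_⟩
      have hxy : y ≠ x := fun h => (hdisj i).ne_of_mem hyi hi h
      exact huniq i j hij y x (by simp [hxy]) ⟨hyi, hyj, hi, hj⟩
    · rw [Set.disjoint_left]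
      exact fun i hi hi2 => (hdisj i).ne_of_mem hi hi2 rfl
  · intro x y hxy
    obtain ⟨i, hi | hi⟩ := hcov x y (by simp [hxy])
    · exact Or.inl ⟨i, hi.1, hi.2⟩
    · exact Or.inr ⟨i, hi.1, hi.2⟩
end

section
/- If there is a polynomial P such that every graph H satisfies χ(H) ≤ P(bp_or(H)), then there is a polynomial Q such that every graph G on n vertices admits a CS-separator of size Q(n). Concretely: given G on n vertices, the auxiliary graph H whose vertices are the disjoint clique–stable-set pairs of G, with (K,S) adjacent to (K',S') whenever S ∩ K' ≠ ∅ or S' ∩ K ≠ ∅, satisfies bp_or(H) ≤ n, and each color class of a proper coloring of H yields a single cut of G separating all pairs in that class. -/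
/-- The type of disjoint clique–stable-set pairs of `G`. -/
def CSPair {V : Type} (G : SimpleGraph V) : Type :=
  {p : Set V × Set V // G.IsClique p.1 ∧ Gᶜ.IsClique p.2 ∧ Disjoint p.1 p.2}

/-- The auxiliary graph on clique–stable-set pairs. -/
def auxGraph {V : Type} (G : SimpleGraph V) : SimpleGraph (CSPair G) where
  Adj p q := (p.1.2 ∩ q.1.1).Nonempty ∨ (q.1.2 ∩ p.1.1).Nonempty
  symm := by constructor; intro p q h; tauto
  loopless := by
    constructor
    intro p h
    rcases h with ⟨v, hv⟩ | ⟨v, hv⟩ <;>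
      exact Set.disjoint_left.mp p.2.2.2 hv.2 hv.1

/-- If there is a polynomial `P` with `χ(H) ≤ P(bp_or(H))` for every finite graph `H`, then
there is a polynomial `Q` such that every graph on `n` vertices has a CS-separator of size
at most `Q(n)`. -/
theorem cs_separation_of_oriented_alon_saks_seymour (P : Polynomial ℕ)
    (hP : ∀ (W : Type) [Fintype W] (H : SimpleGraph W) (k : ℕ)
      (Pk : Fin k → Set W × Set W), IsPackingCert H Pk → H.Colorable (P.eval k)) :
    ∃ Q : Polynomial ℕ, ∀ (V : Type) [Fintype V] (G : SimpleGraph V),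
      ∃ F : Finset (Set V), F.card ≤ Q.eval (Fintype.card V) ∧
        ∀ K S : Set V, G.IsClique K → Gᶜ.IsClique S → Disjoint K S →
          ∃ A ∈ F, K ⊆ A ∧ S ⊆ Aᶜ := by
  classical
  refine ⟨P, ?_⟩
  intro V _ G
  haveI : Finite (CSPair G) := by
    unfold CSPair; infer_instance
  haveI : Fintype (CSPair G) := Fintype.ofFinite _
  set k := Fintype.card V with hk
  let e : V ≃ Fin k := Fintype.equivFin V
  let Pk : Fin k → Set (CSPair G) × Set (CSPair G) :=
    fun i => ({p | e.symm i ∈ p.1.2}, {p | e.symm i ∈ p.1.1})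
  have hcert : IsPackingCert (auxGraph G) Pk := by
    refine ⟨?_, ?_, ?_, ?_⟩
    · intro i
      rw [Set.disjoint_left]
      intro p hS hK
      exact Set.disjoint_left.mp p.2.2.2 hK hS
    · intro i x hx y hy
      exact Or.inl ⟨e.symm i, hx, hy⟩
    · intro x y hadj
      rcases hadj with ⟨v, hvS, hvK⟩ | ⟨v, hvS, hvK⟩
      · exact ⟨e v, Or.inl ⟨by simpa [Pk] using hvS, by simpa [Pk] using hvK⟩⟩
      · exact ⟨e v, Or.inr ⟨by simpa [Pk] using hvS, by simpa [Pk] using hvK⟩⟩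
    · rintro i j hij x y hadj ⟨hxi, hxj, hyi, hyj⟩
      have huv : e.symm i ≠ e.symm j := fun h => hij (e.symm.injective h)
      have hG : G.Adj (e.symm i) (e.symm j) := y.2.1 hyi hyj huv
      have hGc : Gᶜ.Adj (e.symm i) (e.symm j) := x.2.2.1 hxi hxj huv
      exact hGc.2 hG
  have hcol := hP (CSPair G) (auxGraph G) k Pk hcert
  let C := hcol.some
  refine ⟨Finset.image (fun i : Fin (P.eval k) =>
    {v : V | ∃ p : CSPair G, C p = i ∧ v ∈ p.1.1}) Finset.univ, ?_, ?_⟩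
  · exact Finset.card_image_le.trans (by simp)
  · intro K S hK hS hdisj
    let p : CSPair G := ⟨(K, S), hK, hS, hdisj⟩
    refine ⟨_, Finset.mem_image_of_mem _ (Finset.mem_univ (C p)), ?_, ?_⟩
    · intro v hv
      exact ⟨p, rfl, hv⟩
    · intro v hv hmem
      obtain ⟨q, hq, hvK⟩ := hmem
      by_cases hpq : q = p
      · subst hpq
        exact Set.disjoint_left.mp hdisj hvK hv
      · have hnadj : ¬ (auxGraph G).Adj p q := fun hadj => C.valid hadj (hq.symm)
        exact hnadj (Or.inl ⟨v, hv, hvK⟩)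
end

section
/- If there is a polynomial Q such that every graph on n vertices admits a CS-separator of size Q(n), then every graph G satisfies χ(G) ≤ Q(bp_or(G)). Concretely: from an oriented bipartite packing (A₁,B₁),…,(A_k,B_k) of G, build the auxiliary graph H on vertex set {1,…,k} with an edge between i and j whenever Aᵢ ∩ Aⱼ ≠ ∅; then for every vertex x of G, K_x = {i : x ∈ Aᵢ} is a clique of H and S_x = {i : x ∈ Bᵢ} is a stable set of H, and coloring each x by the index of a cut of H separating (K_x, S_x) yields a proper coloring of G. -/
/-- If there is a polynomial `Q` such that every graph on `n` vertices admits a CS-separator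
of size at most `Q(n)`, then every graph `G` with an oriented bipartite packing of size `k`
is properly colorable with `Q(k)` colors, i.e. `χ(G) ≤ Q(bp_or(G))`. -/
theorem oriented_alon_saks_seymour_of_cs_separation (Q : Polynomial ℕ)
    (hQ : ∀ (V : Type) [Fintype V] (G : SimpleGraph V),
      ∃ F : Finset (Set V), F.card ≤ Q.eval (Fintype.card V) ∧
        ∀ K S : Set V, G.IsClique K → Gᶜ.IsClique S → Disjoint K S →
          ∃ A ∈ F, K ⊆ A ∧ S ⊆ Aᶜ) :
    ∀ (V : Type) [Fintype V] (G : SimpleGraph V) (k : ℕ)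
      (Pk : Fin k → Set V × Set V), IsPackingCert G Pk → G.Colorable (Q.eval k) := by
  intro V _ G k Pk hP
  obtain ⟨hdisj, hadj, hcov, huniq⟩ := hP
  -- auxiliary graph on Fin k
  let H : SimpleGraph (Fin k) :=
    { Adj := fun i j => i ≠ j ∧ ((Pk i).1 ∩ (Pk j).1).Nonempty
      symm := by
        constructor
        rintro i j ⟨h1, h2⟩
        exact ⟨h1.symm, by rwa [Set.inter_comm]⟩
      loopless := ⟨fun i h => h.1 rfl⟩ }
  obtain ⟨F, hFcard, hF⟩ := hQ (Fin k) H
  rw [Fintype.card_fin] at hFcard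
  have key : ∀ x : V, ∃ A ∈ F, {i | x ∈ (Pk i).1} ⊆ A ∧ {i | x ∈ (Pk i).2} ⊆ Aᶜ := by
    intro x
    apply hF
    · intro i hi j hj hij
      exact ⟨hij, x, hi, hj⟩
    · intro i hi j hj hij
      rw [SimpleGraph.compl_adj]
      refine ⟨hij, ?_⟩
      rintro ⟨-, z, hzi, hzj⟩
      exact huniq i j hij z x (hadj i z hzi x hi) ⟨hzi, hzj, hi, hj⟩
    · rw [Set.disjoint_left]
      intro i hi hi'
      exact Set.disjoint_left.mp (hdisj i) hi hi'
  choose A hAF hAK hAS using key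
  let c : V → {B // B ∈ F} := fun x => ⟨A x, hAF x⟩
  have hc : ∀ x y : V, G.Adj x y → c x ≠ c y := by
    intro x y hxy hcxy
    have hA : A x = A y := congrArg Subtype.val hcxy
    obtain ⟨i, hi | hi⟩ := hcov x y hxy
    · have h1 : i ∈ A x := hAK x hi.1
      have h2 : i ∈ (A y)ᶜ := hAS y hi.2
      rw [hA] at h1
      exact h2 h1
    · have h1 : i ∈ A y := hAK y hi.1
      have h2 : i ∈ (A x)ᶜ := hAS x hi.2
      rw [← hA] at h1
      exact h2 h1
  have col : G.Coloring {B // B ∈ F} := SimpleGraph.Coloring.mk c (fun h => hc _ _ h)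
  have : G.Colorable (Fintype.card {B // B ∈ F}) := col.colorable
  rw [Fintype.card_coe] at this
  exact this.mono hFcard
end

section
/- Let G be a graph with a t-biclique covering B₁,…,B_k (each Bᵢ a complete bipartite subgraph with parts Bᵢ⁻, Bᵢ⁺), and let H be the graph on V(G) whose edges are exactly the edges of G covered exactly t times. Then bp₁(H) ≤ (2k)^t; that is, the edges of H can be partitioned into at most (2k)^t complete bipartite graphs. -/
/-- The number of bicliques of the family `B` covering the pair `{x, y}` (in either
orientation). -/
noncomputable def coverCount {V : Type*} {k : ℕ} (B : Fin k → Set V × Set V) (x y : V) : ℕ :=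
  {i : Fin k | (x ∈ (B i).1 ∧ y ∈ (B i).2) ∨ (y ∈ (B i).1 ∧ x ∈ (B i).2)}.ncard

/-- A `t`-biclique covering of `G` of size `k`. -/
def IsBicliqueCover {V : Type*} (G : SimpleGraph V) (t : ℕ) {k : ℕ}
    (B : Fin k → Set V × Set V) : Prop :=
  (∀ i, Disjoint (B i).1 (B i).2) ∧
  (∀ i, ∀ x ∈ (B i).1, ∀ y ∈ (B i).2, G.Adj x y) ∧
  (∀ x y, G.Adj x y → 1 ≤ coverCount B x y ∧ coverCount B x y ≤ t)

/-- The `t`-biclique covering number `bp_t(G)`. -/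
noncomputable def bp {V : Type*} (G : SimpleGraph V) (t : ℕ) : ℕ :=
  sInf {k : ℕ | ∃ B : Fin k → Set V × Set V, IsBicliqueCover G t B}

attribute [local instance] Classical.propDecidable

section Aux

variable {V : Type*} {k t : ℕ}

/-- Index of the biclique underlying a signed biclique. -/
def idxB {k : ℕ} (m : Fin (2 * k)) : Fin k := ⟨m.val / 2, by have := m.isLt; omega⟩

/-- The "first" side of a signed biclique. -/
def sideB (B : Fin k → Set V × Set V) (m : Fin (2 * k)) : Set V :=
  if m.val % 2 = 0 then (B (idxB m)).1 else (B (idxB m)).2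

/-- The "second" side of a signed biclique. -/
def cosideB (B : Fin k → Set V × Set V) (m : Fin (2 * k)) : Set V :=
  if m.val % 2 = 0 then (B (idxB m)).2 else (B (idxB m)).1

/-- Signed covering relation. -/
def CovP (B : Fin k → Set V × Set V) (x y : V) (m : Fin (2 * k)) : Prop :=
  x ∈ sideB B m ∧ y ∈ cosideB B m

/-- Orientation reversal. -/
def revm {k : ℕ} (m : Fin (2 * k)) : Fin (2 * k) :=
  if h : m.val % 2 = 0 then ⟨m.val + 1, by have := m.isLt; omega⟩
  else ⟨m.val - 1, by have := m.isLt; omega⟩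

lemma revm_val {m : Fin (2 * k)} :
    (revm m).val = if m.val % 2 = 0 then m.val + 1 else m.val - 1 := by
  unfold revm; split_ifs <;> rfl

lemma idx_revm {m : Fin (2 * k)} : idxB (revm m) = idxB m := by
  unfold revm
  split_ifs with h <;> (apply Fin.ext; simp [idxB]; omega)

lemma sideB_revm {B : Fin k → Set V × Set V} {m : Fin (2 * k)} :
    sideB B (revm m) = cosideB B m := by
  unfold sideB cosideB
  rw [idx_revm, revm_val]
  by_cases h : m.val % 2 = 0
  · rw [if_pos h, if_neg (show ¬((m.val + 1) % 2 = 0) by omega), if_pos h]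
  · rw [if_neg h, if_pos (show (m.val - 1) % 2 = 0 by omega), if_neg h]

lemma cosideB_revm {B : Fin k → Set V × Set V} {m : Fin (2 * k)} :
    cosideB B (revm m) = sideB B m := by
  unfold sideB cosideB
  rw [idx_revm, revm_val]
  by_cases h : m.val % 2 = 0
  · rw [if_pos h, if_neg (show ¬((m.val + 1) % 2 = 0) by omega), if_pos h]
  · rw [if_neg h, if_pos (show (m.val - 1) % 2 = 0 by omega), if_neg h]

lemma covP_revm {B : Fin k → Set V × Set V} {x y : V} {m : Fin (2 * k)} :
    CovP B y x (revm m) ↔ CovP B x y m := by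
  unfold CovP
  rw [sideB_revm, cosideB_revm]
  exact and_comm

/-- Two signed covers of the same pair over the same biclique coincide. -/
lemma covP_eq_of_idx {B : Fin k → Set V × Set V} {x y : V} {m m' : Fin (2 * k)}
    (hB1 : ∀ i, Disjoint (B i).1 (B i).2)
    (h1 : CovP B x y m) (h2 : CovP B x y m') (h : m.val / 2 = m'.val / 2) : m = m' := by
  by_contra hne
  have hv : m.val ≠ m'.val := fun e => hne (Fin.ext e)
  have hi : idxB m = idxB (k := k) m' := Fin.ext h
  have hp : m.val % 2 ≠ m'.val % 2 := by omega
  rcases h1 with ⟨hx1, _⟩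
  rcases h2 with ⟨hx2, _⟩
  simp only [sideB] at hx1 hx2
  by_cases hm : m.val % 2 = 0
  · rw [if_pos hm] at hx1
    rw [if_neg (by omega), ← hi] at hx2
    exact Set.disjoint_left.mp (hB1 (idxB m)) hx1 hx2
  · rw [if_neg hm] at hx1
    rw [if_pos (by omega), ← hi] at hx2
    exact Set.disjoint_left.mp (hB1 (idxB m)) hx2 hx1

lemma covP_gadj {G : SimpleGraph V} {B : Fin k → Set V × Set V} {x y : V} {m : Fin (2 * k)}
    (hB2 : ∀ i, ∀ x ∈ (B i).1, ∀ y ∈ (B i).2, G.Adj x y) (h : CovP B x y m) : G.Adj x y := by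
  rcases h with ⟨hx, hy⟩
  simp only [sideB, cosideB] at hx hy
  by_cases hm : m.val % 2 = 0
  · rw [if_pos hm] at hx hy
    exact hB2 _ _ hx _ hy
  · rw [if_neg hm] at hx hy
    exact (hB2 _ _ hy _ hx).symm

/-- The covering indices of a pair, as a finset. -/
noncomputable def covSet (B : Fin k → Set V × Set V) (x y : V) : Finset (Fin k) :=
  Finset.univ.filter (fun i => (x ∈ (B i).1 ∧ y ∈ (B i).2) ∨ (y ∈ (B i).1 ∧ x ∈ (B i).2))

lemma coverCount_eq_card {B : Fin k → Set V × Set V} (x y : V) :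
    coverCount B x y = (covSet B x y).card := by
  have h : {i : Fin k | (x ∈ (B i).1 ∧ y ∈ (B i).2) ∨ (y ∈ (B i).1 ∧ x ∈ (B i).2)}
      = ↑(covSet B x y) := by
    ext i; simp [covSet]
  rw [coverCount, h, Set.ncard_coe_finset]

lemma coverCount_comm {B : Fin k → Set V × Set V} (x y : V) :
    coverCount B x y = coverCount B y x := by
  unfold coverCount
  congr 1
  ext i
  simp only [Set.mem_setOf_eq]
  tauto

lemma idx_mem_covSet {B : Fin k → Set V × Set V} {x y : V} {m : Fin (2 * k)}
    (h : CovP B x y m) : idxB m ∈ covSet B x y := by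
  rcases h with ⟨hx, hy⟩
  simp only [sideB, cosideB] at hx hy
  simp only [covSet, Finset.mem_filter, Finset.mem_univ, true_and]
  by_cases hm : m.val % 2 = 0
  · rw [if_pos hm] at hx hy; exact Or.inl ⟨hx, hy⟩
  · rw [if_neg hm] at hx hy; exact Or.inr ⟨hy, hx⟩

/-- The signed covers of a pair, as a finset. -/
noncomputable def sFin (B : Fin k → Set V × Set V) (x y : V) : Finset (Fin (2 * k)) :=
  Finset.univ.filter (CovP B x y)

lemma mem_sFin {B : Fin k → Set V × Set V} {x y : V} {m : Fin (2 * k)} :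
    m ∈ sFin B x y ↔ CovP B x y m := by simp [sFin]

lemma card_sFin {B : Fin k → Set V × Set V} (hB1 : ∀ i, Disjoint (B i).1 (B i).2) (x y : V) :
    (sFin B x y).card = coverCount B x y := by
  rw [coverCount_eq_card]
  apply Finset.card_bij (fun m _ => idxB m)
  · intro m hm
    exact idx_mem_covSet (mem_sFin.mp hm)
  · intro m hm m' hm' h
    exact covP_eq_of_idx hB1 (mem_sFin.mp hm) (mem_sFin.mp hm')
      (congrArg Fin.val h)
  · intro i hi
    simp only [covSet, Finset.mem_filter, Finset.mem_univ, true_and] at hi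
    rcases hi with ⟨hx, hy⟩ | ⟨hy, hx⟩
    · refine ⟨⟨2 * i.val, by have := i.isLt; omega⟩, ?_, ?_⟩
      · rw [mem_sFin]
        have h0 : ((⟨2 * i.val, by have := i.isLt; omega⟩ : Fin (2 * k))).val % 2 = 0 := by
          simp only [Fin.val_mk]; omega
        have h1 : idxB (⟨2 * i.val, by have := i.isLt; omega⟩ : Fin (2 * k)) = i := by
          apply Fin.ext; simp only [idxB, Fin.val_mk]; omega
        exact ⟨by simp only [sideB]; rw [if_pos h0, h1]; exact hx,
          by simp only [cosideB]; rw [if_pos h0, h1]; exact hy⟩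
      · exact Fin.ext (by simp only [idxB, Fin.val_mk]; omega)
    · refine ⟨⟨2 * i.val + 1, by have := i.isLt; omega⟩, ?_, ?_⟩
      · rw [mem_sFin]
        have h0 : ¬(((⟨2 * i.val + 1, by have := i.isLt; omega⟩ : Fin (2 * k))).val % 2 = 0) := by
          simp only [Fin.val_mk]; omega
        have h1 : idxB (⟨2 * i.val + 1, by have := i.isLt; omega⟩ : Fin (2 * k)) = i := by
          apply Fin.ext; simp only [idxB, Fin.val_mk]; omega
        exact ⟨by simp only [sideB]; rw [if_neg h0, h1]; exact hx,
          by simp only [cosideB]; rw [if_neg h0, h1]; exact hy⟩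
      · exact Fin.ext (by simp only [idxB, Fin.val_mk]; omega)

lemma revm_le_revm {B : Fin k → Set V × Set V} {x y : V} {m₀ m : Fin (2 * k)}
    (hB1 : ∀ i, Disjoint (B i).1 (B i).2)
    (h1 : CovP B x y m₀) (h2 : CovP B x y m) (hle : m₀ ≤ m) : revm m₀ ≤ revm m := by
  rcases eq_or_ne m₀ m with rfl | hne
  · exact le_refl _
  have hdiv : m₀.val / 2 ≠ m.val / 2 := fun h => hne (covP_eq_of_idx hB1 h1 h2 h)
  have hlev : m₀.val ≤ m.val := hle
  rw [Fin.le_def, revm_val, revm_val]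
  split_ifs <;> omega

lemma mem_sFin_rev {B : Fin k → Set V × Set V} {x y : V} {m : Fin (2 * k)} :
    revm m ∈ sFin B y x ↔ m ∈ sFin B x y := by
  rw [mem_sFin, mem_sFin, covP_revm]

lemma revm_revm {m : Fin (2 * k)} : revm (revm m) = m := by
  apply Fin.ext
  rw [revm_val, revm_val]
  have := m.isLt
  split_ifs <;> omega

lemma min'_sFin_rev {B : Fin k → Set V × Set V} {x y : V}
    (hB1 : ∀ i, Disjoint (B i).1 (B i).2)
    (hne : (sFin B x y).Nonempty) (hne' : (sFin B y x).Nonempty) :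
    (sFin B y x).min' hne' = revm ((sFin B x y).min' hne) := by
  apply le_antisymm
  · exact Finset.min'_le _ _ (mem_sFin_rev.mpr ((sFin B x y).min'_mem hne))
  · have h1 : revm ((sFin B y x).min' hne') ∈ sFin B x y := by
      rw [← mem_sFin_rev, revm_revm]
      exact (sFin B y x).min'_mem hne'
    have h2 : revm ((sFin B x y).min' hne) ≤ revm (revm ((sFin B y x).min' hne')) :=
      revm_le_revm hB1 (mem_sFin.mp ((sFin B x y).min'_mem hne)) (mem_sFin.mp h1)
        (Finset.min'_le _ _ h1)
    rwa [revm_revm] at h2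

/-- Validity of a label: strictly monotone and canonically oriented. -/
def ValidG (t : ℕ) {k : ℕ} (g : Fin t → Fin (2 * k)) : Prop :=
  StrictMono g ∧ ∀ h : 0 < t, (g ⟨0, h⟩).val % 2 = 0

/-- The first side of the biclique associated to a label. -/
noncomputable def asetG (B : Fin k → Set V × Set V) (H : SimpleGraph V)
    (g : Fin t → Fin (2 * k)) : Set V :=
  if ValidG t g then H.support ∩ ⋂ j, sideB B (g j) else ∅

/-- The second side of the biclique associated to a label. -/
noncomputable def csetG (B : Fin k → Set V × Set V) (H : SimpleGraph V)
    (g : Fin t → Fin (2 * k)) : Set V :=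
  if ValidG t g then H.support ∩ ⋂ j, cosideB B (g j) else ∅

lemma adj_aux {G H : SimpleGraph V} {B : Fin k → Set V × Set V}
    (hB : IsBicliqueCover G t B)
    (hH : ∀ x y, H.Adj x y ↔ (G.Adj x y ∧ coverCount B x y = t))
    {g : Fin t → Fin (2 * k)} {x y : V}
    (hx : x ∈ asetG B H g) (hy : y ∈ csetG B H g) : H.Adj x y := by
  by_cases hv : ValidG t g
  · rw [asetG, if_pos hv] at hx
    rw [csetG, if_pos hv] at hy
    obtain ⟨hxsup, hxi⟩ := hx
    obtain ⟨_, hyi⟩ := hy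
    obtain ⟨z, hz⟩ := (SimpleGraph.mem_support H).mp hxsup
    have ht : 0 < t := by
      obtain ⟨hGxz, hcc⟩ := (hH x z).mp hz
      have := (hB.2.2 x z hGxz).1
      omega
    have hcov : ∀ j, CovP B x y (g j) := fun j =>
      ⟨Set.mem_iInter.mp hxi j, Set.mem_iInter.mp hyi j⟩
    have hGxy : G.Adj x y := covP_gadj hB.2.1 (hcov ⟨0, ht⟩)
    have hle : coverCount B x y ≤ t := (hB.2.2 x y hGxy).2
    have hge : t ≤ coverCount B x y := by
      rw [coverCount_eq_card]
      have h1 : t = (Finset.univ : Finset (Fin t)).card := by simp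
      rw [h1]
      apply Finset.card_le_card_of_injOn (fun j => idxB (g j))
      · intro j _
        exact idx_mem_covSet (hcov j)
      · intro j _ j' _ h
        have hdiv : (g j).val / 2 = (g j').val / 2 := congrArg Fin.val h
        exact hv.1.injective (covP_eq_of_idx hB.1 (hcov j) (hcov j') hdiv)
    exact (hH x y).mpr ⟨hGxy, le_antisymm hle hge⟩
  · rw [asetG, if_neg hv] at hx
    exact absurd hx (Set.notMem_empty x)

end Aux

/-- If `B₁, …, B_k` is a `t`-biclique covering of `G` and `H` is the graph whose edges are
exactly the edges of `G` covered exactly `t` times, then `bp₁(H) ≤ (2k)^t`. -/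
theorem bp_one_of_exactly_t_covered_edges {V : Type*} [Fintype V] (G : SimpleGraph V)
    (t k : ℕ) (B : Fin k → Set V × Set V) (hB : IsBicliqueCover G t B)
    (H : SimpleGraph V)
    (hH : ∀ x y, H.Adj x y ↔ (G.Adj x y ∧ coverCount B x y = t)) :
    bp H 1 ≤ (2 * k) ^ t := by
  classical
  set N := (2 * k) ^ t with hN
  have hcard : Fintype.card (Fin t → Fin (2 * k)) = N := by
    rw [Fintype.card_fun, Fintype.card_fin, Fintype.card_fin]
  let e : Fin N ≃ (Fin t → Fin (2 * k)) := (Fintype.equivFinOfCardEq hcard).symm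
  apply Nat.sInf_le
  refine ⟨fun n => (asetG B H (e n), csetG B H (e n)), ?_, ?_, ?_⟩
  · intro n
    rw [Set.disjoint_left]
    intro z hz1 hz2
    exact H.loopless.irrefl z (adj_aux hB hH hz1 hz2)
  · intro n x hx y hy
    exact adj_aux hB hH hx hy
  · intro x y hxy
    obtain ⟨hGxy, hcc⟩ := (hH x y).mp hxy
    have ht : 0 < t := by
      have := (hB.2.2 x y hGxy).1
      omega
    have hScard : (sFin B x y).card = t := by rw [card_sFin hB.1, hcc]
    have hS'card : (sFin B y x).card = t := by
      rw [card_sFin hB.1, coverCount_comm]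
      exact hcc
    have hSne : (sFin B x y).Nonempty := Finset.card_pos.mp (by omega)
    have hS'ne : (sFin B y x).Nonempty := Finset.card_pos.mp (by omega)
    set m₀ := (sFin B x y).min' hSne with hm₀
    have hminrev : (sFin B y x).min' hS'ne = revm m₀ := min'_sFin_rev hB.1 hSne hS'ne
    set g₁ : Fin t → Fin (2 * k) := ⇑((sFin B x y).orderEmbOfFin hScard) with hg₁
    set g₂ : Fin t → Fin (2 * k) := ⇑((sFin B y x).orderEmbOfFin hS'card) with hg₂
    set g₀ : Fin t → Fin (2 * k) := if m₀.val % 2 = 0 then g₁ else g₂ with hg₀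
    -- key uniqueness facts
    have key1 : ∀ g : Fin t → Fin (2 * k), x ∈ asetG B H g → y ∈ csetG B H g →
        g = g₁ ∧ m₀.val % 2 = 0 := by
      intro g hx hy
      by_cases hv : ValidG t g
      · rw [asetG, if_pos hv] at hx
        rw [csetG, if_pos hv] at hy
        have hmem : ∀ j, g j ∈ sFin B x y := fun j =>
          mem_sFin.mpr ⟨Set.mem_iInter.mp hx.2 j, Set.mem_iInter.mp hy.2 j⟩
        have hgeq : g = g₁ := Finset.orderEmbOfFin_unique hScard hmem hv.1
        refine ⟨hgeq, ?_⟩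
        have hpar := hv.2 ht
        rw [hgeq] at hpar
        rwa [hg₁, Finset.orderEmbOfFin_zero hScard ht] at hpar
      · rw [asetG, if_neg hv] at hx
        exact absurd hx (Set.notMem_empty x)
    have key2 : ∀ g : Fin t → Fin (2 * k), y ∈ asetG B H g → x ∈ csetG B H g →
        g = g₂ ∧ ¬(m₀.val % 2 = 0) := by
      intro g hy hx
      by_cases hv : ValidG t g
      · rw [asetG, if_pos hv] at hy
        rw [csetG, if_pos hv] at hx
        have hmem : ∀ j, g j ∈ sFin B y x := fun j =>
          mem_sFin.mpr ⟨Set.mem_iInter.mp hy.2 j, Set.mem_iInter.mp hx.2 j⟩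
        have hgeq : g = g₂ := Finset.orderEmbOfFin_unique hS'card hmem hv.1
        refine ⟨hgeq, ?_⟩
        have hpar := hv.2 ht
        rw [hgeq] at hpar
        rw [hg₂, Finset.orderEmbOfFin_zero hS'card ht, hminrev, revm_val] at hpar
        intro he
        rw [if_pos he] at hpar
        omega
      · rw [asetG, if_neg hv] at hy
        exact absurd hy (Set.notMem_empty y)
    -- the covering set is exactly the singleton {e.symm g₀}
    have hsupx : x ∈ H.support := (SimpleGraph.mem_support H).mpr ⟨y, hxy⟩
    have hsupy : y ∈ H.support := (SimpleGraph.mem_support H).mpr ⟨x, hxy.symm⟩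
    have hset : {n : Fin N |
        (x ∈ (asetG B H (e n), csetG B H (e n)).1 ∧ y ∈ (asetG B H (e n), csetG B H (e n)).2) ∨
        (y ∈ (asetG B H (e n), csetG B H (e n)).1 ∧ x ∈ (asetG B H (e n), csetG B H (e n)).2)}
        = {e.symm g₀} := by
      ext n
      simp only [Set.mem_setOf_eq, Set.mem_singleton_iff]
      constructor
      · rintro (⟨hx, hy⟩ | ⟨hy, hx⟩)
        · obtain ⟨hgeq, hpar⟩ := key1 (e n) hx hy
          have : e n = g₀ := by rw [hg₀, if_pos hpar]; exact hgeq
          rw [← this, Equiv.symm_apply_apply]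
        · obtain ⟨hgeq, hpar⟩ := key2 (e n) hy hx
          have : e n = g₀ := by rw [hg₀, if_neg hpar]; exact hgeq
          rw [← this, Equiv.symm_apply_apply]
      · rintro rfl
        rw [Equiv.apply_symm_apply]
        by_cases hpar : m₀.val % 2 = 0
        · left
          have hval : ValidG t g₁ := by
            constructor
            · exact ((sFin B x y).orderEmbOfFin hScard).strictMono
            · intro h
              rw [hg₁, Finset.orderEmbOfFin_zero hScard h]
              exact hpar
          have hmem : ∀ j, CovP B x y (g₁ j) := fun j =>
            mem_sFin.mp (Finset.orderEmbOfFin_mem _ hScard j)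
          rw [hg₀, if_pos hpar]
          constructor
          · rw [asetG, if_pos hval]
            exact ⟨hsupx, Set.mem_iInter.mpr fun j => (hmem j).1⟩
          · rw [csetG, if_pos hval]
            exact ⟨hsupy, Set.mem_iInter.mpr fun j => (hmem j).2⟩
        · right
          have hval : ValidG t g₂ := by
            constructor
            · exact ((sFin B y x).orderEmbOfFin hS'card).strictMono
            · intro h
              rw [hg₂, Finset.orderEmbOfFin_zero hS'card h, hminrev, revm_val,
                if_neg hpar]
              have : 1 ≤ m₀.val := by omega
              omega
          have hmem : ∀ j, CovP B y x (g₂ j) := fun j =>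
            mem_sFin.mp (Finset.orderEmbOfFin_mem _ hS'card j)
          rw [hg₀, if_neg hpar]
          constructor
          · rw [asetG, if_pos hval]
            exact ⟨hsupy, Set.mem_iInter.mpr fun j => (hmem j).1⟩
          · rw [csetG, if_pos hval]
            exact ⟨hsupx, Set.mem_iInter.mpr fun j => (hmem j).2⟩
    have : coverCount (fun n => (asetG B H (e n), csetG B H (e n))) x y = 1 := by
      rw [coverCount, hset, Set.ncard_singleton]
    omega
end
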